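/- arXiv:1312.5567 — 3 statements merged into one kernel-verified Lean document; each statement's English description precedes it below -/
import Mathlib

section
/- For 1 ≤ p < ∞ and a measurable function f on (0,∞), the operator T f(r) := -∫_r^∞ f(s)/s ds satisfies ‖T f‖_{L^p(ℝ²)} ≲_p ‖f‖_{L^p(ℝ²)}, where the L^p norms are of the associated radial functions on ℝ² (i.e., with measure r dr). -/
open MeasureTheory Set
open scoped ENNReal NNReal

/-- The 2D Lebesgue measure on radial profiles: `r dr` on `(0, ∞)`. -/
noncomputable def radialMeasure : Measure ℝ :=
  (volume.restrict (Set.Ioi (0 : ℝ))).withDensity fun r => ENNReal.ofReal r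

lemma lint_tail {b : ℝ} (hb : b < -1) {c : ℝ} (hc : 0 < c) :
    ∫⁻ s in Ioi c, ENNReal.ofReal (s ^ b) = ENNReal.ofReal (-c ^ (b + 1) / (b + 1)) := by
  rw [← ofReal_integral_eq_lintegral_ofReal (integrableOn_Ioi_rpow_of_lt hb hc) ?_,
    integral_Ioi_rpow_of_lt hb hc]
  filter_upwards [ae_restrict_mem measurableSet_Ioi] with s hs
  exact Real.rpow_nonneg (le_of_lt (hc.trans hs)) _

lemma lint_head {γ : ℝ} (hγ : -1 < γ) {s : ℝ} (hs : 0 < s) :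
    ∫⁻ r in Ioo (0:ℝ) s, ENNReal.ofReal (r ^ γ) = ENNReal.ofReal (s ^ (γ + 1) / (γ + 1)) := by
  have hint : IntegrableOn (fun r : ℝ => r ^ γ) (Ioc 0 s) := by
    have h := intervalIntegral.intervalIntegrable_rpow' (a := 0) (b := s) hγ
    rwa [intervalIntegrable_iff, uIoc_of_le hs.le] at h
  rw [setLIntegral_congr Ioo_ae_eq_Ioc, ← ofReal_integral_eq_lintegral_ofReal hint ?_]
  · congr 1
    rw [← intervalIntegral.integral_of_le hs.le, integral_rpow (Or.inl hγ),
      Real.zero_rpow (by linarith), sub_zero]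
  · filter_upwards [ae_restrict_mem measurableSet_Ioc] with r hr
    exact Real.rpow_nonneg hr.1.le _

lemma hardy_swap {ψ : ℝ → ℝ≥0∞} (hψ : Measurable ψ) {γ : ℝ} (hγ : -1 < γ) :
    ∫⁻ r in Ioi (0:ℝ), ENNReal.ofReal (r ^ γ) * ∫⁻ s in Ioi r, ψ s
      = ∫⁻ s in Ioi (0:ℝ), ψ s * ENNReal.ofReal (s ^ (γ + 1) / (γ + 1)) := by
  set F : ℝ → ℝ → ℝ≥0∞ := fun r s =>
    {p : ℝ × ℝ | p.1 < p.2}.indicator (fun p => ENNReal.ofReal (p.1 ^ γ) * ψ p.2) (r, s) with hF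
  have hFmeas : Measurable (Function.uncurry F) := by
    apply Measurable.indicator
    · exact ((measurable_fst.pow measurable_const).ennreal_ofReal).mul (hψ.comp measurable_snd)
    · exact measurableSet_lt measurable_fst measurable_snd
  have hmono : Measurable fun r : ℝ => ENNReal.ofReal (r ^ γ) :=
    (measurable_id.pow measurable_const).ennreal_ofReal
  have step1 : ∫⁻ r in Ioi (0:ℝ), ENNReal.ofReal (r ^ γ) * ∫⁻ s in Ioi r, ψ s
      = ∫⁻ r in Ioi (0:ℝ), ∫⁻ s in Ioi (0:ℝ), F r s := by
    apply lintegral_congr_ae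
    filter_upwards [ae_restrict_mem measurableSet_Ioi] with r hr
    have : ∀ s, F r s = (Ioi r).indicator (fun s => ENNReal.ofReal (r ^ γ) * ψ s) s := by
      intro s
      simp only [hF, Set.indicator_apply, Set.mem_setOf_eq, Set.mem_Ioi]
    simp only [this]
    rw [lintegral_indicator measurableSet_Ioi, Measure.restrict_restrict measurableSet_Ioi,
      Set.Ioi_inter_Ioi, max_eq_left (le_of_lt hr), lintegral_const_mul _ hψ]
  have step3 : ∀ s ∈ Ioi (0:ℝ), ∫⁻ r in Ioi (0:ℝ), F r s
      = ψ s * ENNReal.ofReal (s ^ (γ + 1) / (γ + 1)) := by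
    intro s hs
    have : ∀ r, F r s = (Iio s).indicator (fun r => ENNReal.ofReal (r ^ γ) * ψ s) r := by
      intro r
      simp only [hF, Set.indicator_apply, Set.mem_setOf_eq, Set.mem_Iio]
    simp only [this]
    rw [lintegral_indicator measurableSet_Iio, Measure.restrict_restrict measurableSet_Iio,
      Set.Iio_inter_Ioi, lintegral_mul_const _ hmono, lint_head hγ hs, mul_comm]
  rw [step1, lintegral_lintegral_swap hFmeas.aemeasurable]
  apply lintegral_congr_ae
  filter_upwards [ae_restrict_mem measurableSet_Ioi] with s hs
  exact step3 s hs

lemma hardy_lintegral (pr : ℝ) (hpr : 1 ≤ pr) :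
    ∃ K : ℝ≥0∞, K ≠ ⊤ ∧ ∀ φ : ℝ → ℝ≥0∞, Measurable φ →
      ∫⁻ r in Ioi (0:ℝ), (∫⁻ s in Ioi r, φ s * (ENNReal.ofReal s)⁻¹) ^ pr * ENNReal.ofReal r
        ≤ K * ∫⁻ s in Ioi (0:ℝ), φ s ^ pr * ENNReal.ofReal s := by
  rcases eq_or_lt_of_le hpr with h1 | h1
  · -- pr = 1
    refine ⟨1, ENNReal.one_ne_top, fun φ hφ => ?_⟩
    rw [← h1]
    simp only [ENNReal.rpow_one, one_mul]
    have hψ : Measurable fun s => φ s * (ENNReal.ofReal s)⁻¹ :=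
      hφ.mul ENNReal.measurable_ofReal.inv
    calc ∫⁻ r in Ioi (0:ℝ), (∫⁻ s in Ioi r, φ s * (ENNReal.ofReal s)⁻¹) * ENNReal.ofReal r
        = ∫⁻ r in Ioi (0:ℝ), ENNReal.ofReal (r ^ (1:ℝ)) *
            ∫⁻ s in Ioi r, φ s * (ENNReal.ofReal s)⁻¹ := by
          apply lintegral_congr fun r => ?_
          rw [Real.rpow_one, mul_comm]
      _ = ∫⁻ s in Ioi (0:ℝ), (φ s * (ENNReal.ofReal s)⁻¹) *
            ENNReal.ofReal (s ^ ((1:ℝ) + 1) / ((1:ℝ) + 1)) := hardy_swap hψ (by norm_num)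
      _ ≤ ∫⁻ s in Ioi (0:ℝ), φ s * ENNReal.ofReal s := by
          apply lintegral_mono_ae
          filter_upwards [ae_restrict_mem measurableSet_Ioi] with s hs
          have hs0 : (0:ℝ) < s := hs
          have key : (ENNReal.ofReal s)⁻¹ * ENNReal.ofReal (s ^ ((1:ℝ) + 1) / ((1:ℝ) + 1))
              ≤ ENNReal.ofReal s := by
            have h2 : s ^ ((1:ℝ) + 1) / ((1:ℝ) + 1) ≤ s * s := by
              rw [show ((1:ℝ) + 1) = ((2:ℕ):ℝ) by norm_num, Real.rpow_natCast]
              nlinarith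
            calc (ENNReal.ofReal s)⁻¹ * ENNReal.ofReal (s ^ ((1:ℝ) + 1) / ((1:ℝ) + 1))
                ≤ (ENNReal.ofReal s)⁻¹ * (ENNReal.ofReal s * ENNReal.ofReal s) := by
                  gcongr
                  rw [← ENNReal.ofReal_mul hs0.le]
                  exact ENNReal.ofReal_le_ofReal h2
              _ = ENNReal.ofReal s := by
                  rw [← mul_assoc, ENNReal.inv_mul_cancel (ENNReal.ofReal_pos.mpr hs0).ne'
                    ENNReal.ofReal_ne_top, one_mul]
          calc φ s * (ENNReal.ofReal s)⁻¹ * ENNReal.ofReal (s ^ ((1:ℝ) + 1) / ((1:ℝ) + 1))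
              = φ s * ((ENNReal.ofReal s)⁻¹ *
                  ENNReal.ofReal (s ^ ((1:ℝ) + 1) / ((1:ℝ) + 1))) := by rw [mul_assoc]
            _ ≤ φ s * ENNReal.ofReal s := mul_le_mul_right key _
  · have pr0 : (0:ℝ) < pr := lt_trans one_pos h1
    have hpr1 : pr - 1 ≠ 0 := sub_ne_zero.mpr (ne_of_gt h1)
    set q : ℝ := pr / (pr - 1) with hq
    have hpq : pr.HolderConjugate q := (Real.holderConjugate_iff_eq_conjExponent h1).2 hq
    have q0 : 0 < q := hpq.symm.pos
    set a : ℝ := (2 * pr)⁻¹ with ha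
    have ha0 : 0 < a := by rw [ha]; positivity
    have hapr : a * pr = 1 / 2 := by rw [ha]; field_simp
    set b : ℝ := (-1 - a) * q with hb
    have hb1 : b < -1 := by
      have hq1 : 1 < q := hpq.symm.lt
      have : (1 + a) * q > 1 := by nlinarith
      rw [hb]; nlinarith
    have hbne : b + 1 ≠ 0 := by linarith
    set m : ℝ := (-(b + 1))⁻¹ with hm
    have hm0 : 0 < m := by rw [hm]; exact inv_pos.mpr (by linarith)
    set M : ℝ≥0∞ := ENNReal.ofReal (m ^ (1 / q)) with hM
    have hMtop : M ^ pr ≠ ⊤ := ENNReal.rpow_ne_top_of_nonneg pr0.le ENNReal.ofReal_ne_top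
    set γ : ℝ := (b + 1) * (1 / q) * pr + 1 with hγdef
    have hγval : γ = -(1 / 2) := by
      rw [hγdef, hb, hq, ha]
      field_simp
      ring
    have hγ : (-1:ℝ) < γ := by rw [hγval]; norm_num
    refine ⟨M ^ pr * 2, ENNReal.mul_ne_top hMtop (by norm_num), fun φ hφ => ?_⟩
    set ψ : ℝ → ℝ≥0∞ := fun s => φ s ^ pr * ENNReal.ofReal (s ^ (a * pr)) with hψdef
    have hψ : Measurable ψ :=
      (hφ.pow measurable_const).mul ((measurable_id.pow measurable_const).ennreal_ofReal)
    -- Step A : pointwise Hölder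
    have stepA : ∀ r : ℝ, 0 < r →
        (∫⁻ s in Ioi r, φ s * (ENNReal.ofReal s)⁻¹)
          ≤ (∫⁻ s in Ioi r, ψ s) ^ (1 / pr) *
            (ENNReal.ofReal (r ^ ((b + 1) * (1 / q))) * M) := by
      intro r hr
      set u : ℝ → ℝ≥0∞ := fun s => φ s * ENNReal.ofReal (s ^ a) with hu
      set v : ℝ → ℝ≥0∞ := fun s => ENNReal.ofReal (s ^ (-1 - a)) with hv
      have hum : Measurable u := hφ.mul ((measurable_id.pow measurable_const).ennreal_ofReal)
      have hvm : Measurable v := (measurable_id.pow measurable_const).ennreal_ofReal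
      have congr1 : ∫⁻ s in Ioi r, φ s * (ENNReal.ofReal s)⁻¹ = ∫⁻ s in Ioi r, (u * v) s := by
        apply lintegral_congr_ae
        filter_upwards [ae_restrict_mem measurableSet_Ioi] with s hs
        have hs0 : 0 < s := lt_trans hr hs
        show φ s * (ENNReal.ofReal s)⁻¹ = φ s * ENNReal.ofReal (s ^ a) * ENNReal.ofReal (s ^ (-1 - a))
        rw [mul_assoc, ← ENNReal.ofReal_mul (Real.rpow_nonneg hs0.le a), ← Real.rpow_add hs0,
          show a + (-1 - a) = -1 by ring, Real.rpow_neg_one, ← ENNReal.ofReal_inv_of_pos hs0]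
      rw [congr1]
      refine le_trans (ENNReal.lintegral_mul_le_Lp_mul_Lq (volume.restrict (Ioi r)) hpq
        hum.aemeasurable hvm.aemeasurable) ?_
      have eq_u : ∫⁻ s in Ioi r, u s ^ pr = ∫⁻ s in Ioi r, ψ s := by
        apply lintegral_congr_ae
        filter_upwards [ae_restrict_mem measurableSet_Ioi] with s hs
        have hs0 : 0 < s := lt_trans hr hs
        show (φ s * ENNReal.ofReal (s ^ a)) ^ pr = φ s ^ pr * ENNReal.ofReal (s ^ (a * pr))
        rw [ENNReal.mul_rpow_of_nonneg _ _ pr0.le,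
          ENNReal.ofReal_rpow_of_pos (Real.rpow_pos_of_pos hs0 a), ← Real.rpow_mul hs0.le]
      have eq_v : ∫⁻ s in Ioi r, v s ^ q = ENNReal.ofReal (-r ^ (b + 1) / (b + 1)) := by
        have e1 : ∫⁻ s in Ioi r, v s ^ q = ∫⁻ s in Ioi r, ENNReal.ofReal (s ^ b) := by
          apply lintegral_congr_ae
          filter_upwards [ae_restrict_mem measurableSet_Ioi] with s hs
          have hs0 : 0 < s := lt_trans hr hs
          show (ENNReal.ofReal (s ^ (-1 - a))) ^ q = ENNReal.ofReal (s ^ b)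
          rw [ENNReal.ofReal_rpow_of_pos (Real.rpow_pos_of_pos hs0 _), ← Real.rpow_mul hs0.le, ← hb]
        rw [e1, lint_tail hb1 hr]
      rw [eq_u, eq_v]
      have e2 : (ENNReal.ofReal (-r ^ (b + 1) / (b + 1))) ^ (1 / q)
          = ENNReal.ofReal (r ^ ((b + 1) * (1 / q))) * M := by
        have hx : -r ^ (b + 1) / (b + 1) = r ^ (b + 1) * m := by
          rw [hm, neg_div, ← div_neg, div_eq_mul_inv]
        rw [hx, ENNReal.ofReal_rpow_of_pos (by positivity),
          Real.mul_rpow (Real.rpow_nonneg hr.le _) hm0.le, ← Real.rpow_mul hr.le, hM,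
          ENNReal.ofReal_mul (Real.rpow_nonneg hr.le _)]
      rw [e2]
    -- Step B : raise to power pr and multiply by r
    have stepB : ∀ r : ℝ, 0 < r →
        (∫⁻ s in Ioi r, φ s * (ENNReal.ofReal s)⁻¹) ^ pr * ENNReal.ofReal r
          ≤ M ^ pr * (ENNReal.ofReal (r ^ γ) * ∫⁻ s in Ioi r, ψ s) := by
      intro r hr
      have h := ENNReal.rpow_le_rpow (stepA r hr) pr0.le
      rw [ENNReal.mul_rpow_of_nonneg _ _ pr0.le, ENNReal.mul_rpow_of_nonneg _ _ pr0.le,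
        ← ENNReal.rpow_mul, one_div, inv_mul_cancel₀ pr0.ne', ENNReal.rpow_one,
        ENNReal.ofReal_rpow_of_pos (Real.rpow_pos_of_pos hr _), ← Real.rpow_mul hr.le] at h
      calc (∫⁻ s in Ioi r, φ s * (ENNReal.ofReal s)⁻¹) ^ pr * ENNReal.ofReal r
          ≤ (∫⁻ s in Ioi r, ψ s) * (ENNReal.ofReal (r ^ ((b + 1) * (1 / q) * pr)) * M ^ pr) *
              ENNReal.ofReal r := mul_le_mul_left h _
        _ = M ^ pr * (ENNReal.ofReal (r ^ γ) * ∫⁻ s in Ioi r, ψ s) := by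
            rw [hγdef, Real.rpow_add hr, ENNReal.ofReal_mul (Real.rpow_nonneg hr.le _),
              Real.rpow_one]
            ring
    -- Step C : integrate
    calc ∫⁻ r in Ioi (0:ℝ), (∫⁻ s in Ioi r, φ s * (ENNReal.ofReal s)⁻¹) ^ pr * ENNReal.ofReal r
        ≤ ∫⁻ r in Ioi (0:ℝ), M ^ pr * (ENNReal.ofReal (r ^ γ) * ∫⁻ s in Ioi r, ψ s) := by
          apply lintegral_mono_ae
          filter_upwards [ae_restrict_mem measurableSet_Ioi] with r hr
          exact stepB r hr
      _ = M ^ pr * ∫⁻ r in Ioi (0:ℝ), ENNReal.ofReal (r ^ γ) * ∫⁻ s in Ioi r, ψ s :=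
          lintegral_const_mul' _ _ hMtop
      _ = M ^ pr * ∫⁻ s in Ioi (0:ℝ), ψ s * ENNReal.ofReal (s ^ (γ + 1) / (γ + 1)) := by
          rw [hardy_swap hψ hγ]
      _ ≤ M ^ pr * (2 * ∫⁻ s in Ioi (0:ℝ), φ s ^ pr * ENNReal.ofReal s) := by
          apply mul_le_mul_right
          rw [← lintegral_const_mul' _ _ (show (2:ℝ≥0∞) ≠ ⊤ by norm_num)]
          apply lintegral_mono_ae
          filter_upwards [ae_restrict_mem measurableSet_Ioi] with s hs
          have hs0 : (0:ℝ) < s := hs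
          show φ s ^ pr * ENNReal.ofReal (s ^ (a * pr)) * ENNReal.ofReal (s ^ (γ + 1) / (γ + 1))
            ≤ 2 * (φ s ^ pr * ENNReal.ofReal s)
          have e3 : s ^ (a * pr) * (s ^ (γ + 1) / (γ + 1)) = 2 * s := by
            rw [hapr, hγval, show -(1/2 : ℝ) + 1 = 1/2 by norm_num,
              show s ^ (1/2 : ℝ) * (s ^ (1/2 : ℝ) / (1/2)) = (s ^ (1/2:ℝ) * s ^ (1/2:ℝ)) * 2 by ring,
              ← Real.rpow_add hs0, show (1/2 : ℝ) + 1/2 = 1 by norm_num, Real.rpow_one, mul_comm]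
          rw [mul_assoc, ← ENNReal.ofReal_mul (Real.rpow_nonneg hs0.le _), e3,
            ENNReal.ofReal_mul zero_le_two, ENNReal.ofReal_ofNat]
          calc φ s ^ pr * (2 * ENNReal.ofReal s) = 2 * (φ s ^ pr * ENNReal.ofReal s) := by ring
            _ ≤ 2 * (φ s ^ pr * ENNReal.ofReal s) := le_refl _
      _ = M ^ pr * 2 * ∫⁻ s in Ioi (0:ℝ), φ s ^ pr * ENNReal.ofReal s := by ring

/-- For `1 ≤ p < ∞`, the operator `T f (r) = -∫_r^∞ f(s)/s ds`
is bounded on `L^p` of radial functions on `ℝ²` (measure `r dr`). -/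
theorem lp_bound_r_dr_inv (p : ℝ≥0∞) (hp1 : 1 ≤ p) (hp2 : p ≠ ⊤) :
    ∃ C : ℝ≥0, ∀ f : ℝ → ℝ, Measurable f →
      eLpNorm (fun r => -∫ s in Set.Ioi r, f s / s) p radialMeasure
        ≤ C * eLpNorm f p radialMeasure := by
  have hp0 : p ≠ 0 := (lt_of_lt_of_le zero_lt_one hp1).ne'
  set pr : ℝ := p.toReal with hprdef
  have hpr : 1 ≤ pr := by
    have := ENNReal.toReal_mono hp2 hp1
    simpa using this
  have pr0 : (0:ℝ) < pr := lt_of_lt_of_le one_pos hpr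
  obtain ⟨K, hKtop, hK⟩ := hardy_lintegral pr hpr
  refine ⟨(K ^ (1 / pr)).toNNReal, fun f hf => ?_⟩
  have hC : ((K ^ (1 / pr)).toNNReal : ℝ≥0∞) = K ^ (1 / pr) :=
    ENNReal.coe_toNNReal (ENNReal.rpow_ne_top_of_nonneg (by positivity) hKtop)
  rw [eLpNorm_eq_lintegral_rpow_enorm_toReal hp0 hp2, eLpNorm_eq_lintegral_rpow_enorm_toReal hp0 hp2, hC]
  set φ : ℝ → ℝ≥0∞ := fun s => (‖f s‖₊ : ℝ≥0∞) with hφdef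
  have hφ : Measurable φ := hf.nnnorm.coe_nnreal_ennreal
  have hdens : Measurable fun r : ℝ => ENNReal.ofReal r := ENNReal.measurable_ofReal
  have hfin : ∀ᵐ r ∂(volume.restrict (Ioi (0:ℝ))), ENNReal.ofReal r < ⊤ :=
    ae_of_all _ fun r => ENNReal.ofReal_lt_top
  -- LHS bound
  have hA : (∫⁻ r, (‖-∫ s in Set.Ioi r, f s / s‖₊ : ℝ≥0∞) ^ pr ∂radialMeasure)
      ≤ ∫⁻ r in Ioi (0:ℝ),
          (∫⁻ s in Ioi r, φ s * (ENNReal.ofReal s)⁻¹) ^ pr * ENNReal.ofReal r := by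
    rw [radialMeasure, lintegral_withDensity_eq_lintegral_mul_non_measurable _ hdens hfin]
    apply lintegral_mono_ae
    filter_upwards [ae_restrict_mem measurableSet_Ioi] with r hr
    have hr0 : (0:ℝ) < r := hr
    have hpt : (‖-∫ s in Set.Ioi r, f s / s‖₊ : ℝ≥0∞)
        ≤ ∫⁻ s in Ioi r, φ s * (ENNReal.ofReal s)⁻¹ := by
      rw [nnnorm_neg]
      refine le_trans (enorm_integral_le_lintegral_enorm _) (le_of_eq ?_)
      apply lintegral_congr_ae
      filter_upwards [ae_restrict_mem measurableSet_Ioi] with s hs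
      have hs0 : (0:ℝ) < s := lt_trans hr0 hs
      rw [div_eq_mul_inv]
      show (‖f s * s⁻¹‖₊ : ℝ≥0∞) = _
      rw [nnnorm_mul, nnnorm_inv, ENNReal.coe_mul,
        ENNReal.coe_inv (nnnorm_ne_zero_iff.mpr hs0.ne'), ← enorm_eq_nnnorm s, Real.enorm_eq_ofReal hs0.le]
    show ENNReal.ofReal r * (‖-∫ s in Set.Ioi r, f s / s‖₊ : ℝ≥0∞) ^ pr
        ≤ (∫⁻ s in Ioi r, φ s * (ENNReal.ofReal s)⁻¹) ^ pr * ENNReal.ofReal r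
    rw [mul_comm]
    exact mul_le_mul_left (ENNReal.rpow_le_rpow hpt pr0.le) _
  -- RHS identification
  have hB : (∫⁻ s, (‖f s‖₊ : ℝ≥0∞) ^ pr ∂radialMeasure)
      = ∫⁻ s in Ioi (0:ℝ), φ s ^ pr * ENNReal.ofReal s := by
    rw [radialMeasure, lintegral_withDensity_eq_lintegral_mul_non_measurable _ hdens hfin]
    exact lintegral_congr fun s => by simp [hφdef, mul_comm]
  calc (∫⁻ r, (‖-∫ s in Set.Ioi r, f s / s‖₊ : ℝ≥0∞) ^ pr ∂radialMeasure) ^ (1 / pr)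
      ≤ (K * ∫⁻ s in Ioi (0:ℝ), φ s ^ pr * ENNReal.ofReal s) ^ (1 / pr) :=
        ENNReal.rpow_le_rpow (le_trans hA (hK φ hφ)) (by positivity)
    _ = K ^ (1 / pr) * (∫⁻ s, (‖f s‖₊ : ℝ≥0∞) ^ pr ∂radialMeasure) ^ (1 / pr) := by
        rw [ENNReal.mul_rpow_of_nonneg _ _ (by positivity), hB]
end

section
/- For a radial function f on ℝ², the function g(r) := -∫_r^∞ f(s) ds satisfies ‖g‖_{L²(ℝ²)} ≲ ‖f‖_{L¹(ℝ²)}, where L^p norms of radial functions are taken with respect to two-dimensional Lebesgue measure (i.e., measure r dr up to constant). -/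
open MeasureTheory Set
open scoped ENNReal NNReal

/-- For a radial function `f` on `ℝ²`, the function
`g(r) = -∫_r^∞ f(s) ds` satisfies `‖g‖_{L²(ℝ²)} ≲ ‖f‖_{L¹(ℝ²)}`,
with `L^p` norms taken with respect to 2D Lebesgue measure (`r dr`). -/
theorem l2_bound_antiderivative : ∃ C : ℝ≥0, ∀ f : ℝ → ℝ, Measurable f →
    eLpNorm (fun r => -∫ s in Set.Ioi r, f s) 2 radialMeasure
      ≤ C * eLpNorm f 1 radialMeasure := by
  refine ⟨1, fun f hf => ?_⟩
  set ν := volume.restrict (Set.Ioi (0:ℝ)) with hν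
  set F : ℝ → ℝ≥0∞ := fun s => (‖f s‖₊ : ℝ≥0∞) with hFdef
  have hFm : Measurable F := hf.nnnorm.coe_nnreal_ennreal
  set ind : ℝ → ℝ → ℝ≥0∞ := fun r s => if r < s then F s else 0 with hinddef
  have hindm : Measurable (Function.uncurry ind) :=
    Measurable.ite (measurableSet_lt measurable_fst measurable_snd)
      (hFm.comp measurable_snd) measurable_const
  have hindr : ∀ r, Measurable (ind r) := fun r => hindm.comp measurable_prodMk_left
  set H : ℝ → ℝ≥0∞ := fun r => ∫⁻ s, ind r s ∂ν with hHdef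
  have hHm : Measurable H := Measurable.lintegral_prod_right (f := ind) hindm
  set R : ℝ≥0∞ := ∫⁻ s, ENNReal.ofReal s * F s ∂ν with hRdef
  have hRm : Measurable (fun t => ENNReal.ofReal t * F t) :=
    ENNReal.measurable_ofReal.mul hFm
  have hμ : radialMeasure = ν.withDensity (fun r => ENNReal.ofReal r) := rfl
  -- pointwise bound on g
  have hgr : ∀ r : ℝ, 0 < r → (‖-∫ s in Set.Ioi r, f s‖₊ : ℝ≥0∞) ≤ H r := by
    intro r hr
    rw [nnnorm_neg]
    refine le_trans (enorm_integral_le_lintegral_enorm _) ?_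
    have hindcalc : (fun s => ind r s) = (Set.Ioi r).indicator F := by
      funext s; simp [hinddef, Set.indicator_apply, Set.mem_Ioi]
    rw [hHdef]
    simp only [hindcalc]
    rw [lintegral_indicator measurableSet_Ioi, hν, Measure.restrict_restrict measurableSet_Ioi,
      Set.inter_eq_self_of_subset_left (Set.Ioi_subset_Ioi hr.le)]
    exact le_rfl
  -- expand square
  have hsq_expand : ∀ r, ENNReal.ofReal r * (H r * H r)
      = ∫⁻ s, ∫⁻ t, ENNReal.ofReal r * (ind r s * ind r t) ∂ν ∂ν := by
    intro r
    have h1 : H r * H r = ∫⁻ s, ind r s * H r ∂ν :=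
      (lintegral_mul_const _ (hindr r)).symm
    have h2 : ∀ s, ENNReal.ofReal r * (ind r s * H r)
        = ∫⁻ t, ENNReal.ofReal r * (ind r s * ind r t) ∂ν := by
      intro s
      rw [hHdef]
      rw [← lintegral_const_mul _ (hindr r), ← lintegral_const_mul]
      exact (hindr r).const_mul _
    rw [h1, ← lintegral_const_mul _ ((hindr r).mul_const _)]
    simp_rw [h2]
  -- swap integrals
  have hswap : (∫⁻ r, ∫⁻ s, ∫⁻ t, ENNReal.ofReal r * (ind r s * ind r t) ∂ν ∂ν ∂ν)
      = ∫⁻ s, ∫⁻ t, ∫⁻ r, ENNReal.ofReal r * (ind r s * ind r t) ∂ν ∂ν ∂ν := by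
    have hK : Measurable (fun q : (ℝ × ℝ) × ℝ =>
        ENNReal.ofReal q.1.1 * (ind q.1.1 q.1.2 * ind q.1.1 q.2)) :=
      (ENNReal.measurable_ofReal.comp (measurable_fst.fst)).mul
        ((hindm.comp measurable_fst).mul
          (hindm.comp ((measurable_fst.fst).prodMk measurable_snd)))
    rw [lintegral_lintegral_swap]
    · congr 1; funext s
      rw [lintegral_lintegral_swap]
      exact ((ENNReal.measurable_ofReal.comp measurable_fst).mul
        ((hindm.comp (measurable_fst.prodMk (measurable_const (a := s)))).mul
          (hindm.comp (measurable_fst.prodMk measurable_snd)))).aemeasurable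
    · exact hK.lintegral_prod_right'.aemeasurable
  -- inner integral bound
  have hinner : ∀ s t : ℝ, (∫⁻ r, ENNReal.ofReal r * (ind r s * ind r t) ∂ν)
      ≤ (ENNReal.ofReal s * F s) * (ENNReal.ofReal t * F t) := by
    intro s t
    set m := min s t with hm
    have hpt : ∀ r, ENNReal.ofReal r * (ind r s * ind r t)
        ≤ (Set.Iio m).indicator (fun _ => ENNReal.ofReal m) r * (F s * F t) := by
      intro r
      by_cases hrs : r < s
      · by_cases hrt : r < t
        · have hrm : r ∈ Set.Iio m := lt_min hrs hrt
          rw [Set.indicator_of_mem hrm]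
          simp only [hinddef, if_pos hrs, if_pos hrt]
          exact mul_le_mul_left (ENNReal.ofReal_le_ofReal (le_of_lt hrm)) _
        · simp [hinddef, if_neg hrt]
      · simp [hinddef, if_neg hrs]
    calc (∫⁻ r, ENNReal.ofReal r * (ind r s * ind r t) ∂ν)
        ≤ ∫⁻ r, (Set.Iio m).indicator (fun _ => ENNReal.ofReal m) r * (F s * F t) ∂ν :=
          lintegral_mono hpt
      _ = (∫⁻ r, (Set.Iio m).indicator (fun _ => ENNReal.ofReal m) r ∂ν) * (F s * F t) :=
          lintegral_mul_const _ ((measurable_const.indicator measurableSet_Iio))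
      _ = ENNReal.ofReal m * ν (Set.Iio m) * (F s * F t) := by
          rw [lintegral_indicator_const measurableSet_Iio]
      _ ≤ ENNReal.ofReal m * ENNReal.ofReal m * (F s * F t) := by
          refine mul_le_mul_left (mul_le_mul_right ?_ _) _
          rw [hν, Measure.restrict_apply measurableSet_Iio, Set.inter_comm, Set.Ioi_inter_Iio,
            Real.volume_Ioo, sub_zero]
      _ ≤ (ENNReal.ofReal s * ENNReal.ofReal t) * (F s * F t) := by
          refine mul_le_mul_left (mul_le_mul' ?_ ?_) _
          · exact ENNReal.ofReal_le_ofReal (min_le_left s t)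
          · exact ENNReal.ofReal_le_ofReal (min_le_right s t)
      _ = (ENNReal.ofReal s * F s) * (ENNReal.ofReal t * F t) := by ring
  -- key inequality
  have key : (∫⁻ r, ENNReal.ofReal r * (H r * H r) ∂ν) ≤ R * R := by
    calc (∫⁻ r, ENNReal.ofReal r * (H r * H r) ∂ν)
        = ∫⁻ r, ∫⁻ s, ∫⁻ t, ENNReal.ofReal r * (ind r s * ind r t) ∂ν ∂ν ∂ν := by
          simp_rw [hsq_expand]
      _ = ∫⁻ s, ∫⁻ t, ∫⁻ r, ENNReal.ofReal r * (ind r s * ind r t) ∂ν ∂ν ∂ν := hswap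
      _ ≤ ∫⁻ s, ∫⁻ t, (ENNReal.ofReal s * F s) * (ENNReal.ofReal t * F t) ∂ν ∂ν :=
          lintegral_mono fun s => lintegral_mono fun t => hinner s t
      _ = ∫⁻ s, (ENNReal.ofReal s * F s) * R ∂ν := by
          simp_rw [lintegral_const_mul _ hRm]
          rfl
      _ = R * R := lintegral_mul_const _ hRm
  -- L¹ norm identification
  have hR1 : eLpNorm f 1 radialMeasure = R := by
    rw [eLpNorm_one_eq_lintegral_enorm, hμ]
    refine (lintegral_withDensity_eq_lintegral_mul _ ENNReal.measurable_ofReal hFm).trans ?_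
    rfl
  -- L² side
  have h2r : ∀ x : ℝ≥0∞, x ^ (2:ℝ) = x * x := fun x => by
    rw [show (2:ℝ) = ((2:ℕ):ℝ) by norm_num, ENNReal.rpow_natCast]; ring
  have hmain : (∫⁻ r, (‖-∫ s in Set.Ioi r, f s‖₊ : ℝ≥0∞) ^ (2:ℝ) ∂radialMeasure) ≤ R * R := by
    simp_rw [h2r]
    have h1 : ∀ᵐ r ∂radialMeasure, r ∈ Set.Ioi (0:ℝ) :=
      (withDensity_absolutelyContinuous ν _).ae_le (ae_restrict_mem measurableSet_Ioi)
    have hae : ∀ᵐ r ∂radialMeasure,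
        (‖-∫ s in Set.Ioi r, f s‖₊ : ℝ≥0∞) * (‖-∫ s in Set.Ioi r, f s‖₊ : ℝ≥0∞) ≤ H r * H r := by
      filter_upwards [h1] with r hr
      exact mul_le_mul' (hgr r hr) (hgr r hr)
    calc (∫⁻ r, (‖-∫ s in Set.Ioi r, f s‖₊ : ℝ≥0∞) * (‖-∫ s in Set.Ioi r, f s‖₊ : ℝ≥0∞) ∂radialMeasure)
        ≤ ∫⁻ r, H r * H r ∂radialMeasure := lintegral_mono_ae hae
      _ = ∫⁻ r, ENNReal.ofReal r * (H r * H r) ∂ν := by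
          rw [hμ]; refine (lintegral_withDensity_eq_lintegral_mul _ ENNReal.measurable_ofReal (hHm.mul hHm)).trans ?_
          rfl
      _ ≤ R * R := key
  rw [eLpNorm_eq_lintegral_rpow_enorm_toReal two_ne_zero ENNReal.ofNat_ne_top, hR1]
  simp only [ENNReal.toReal_ofNat, ENNReal.coe_one, one_mul]
  calc (∫⁻ r, (‖-∫ s in Set.Ioi r, f s‖₊ : ℝ≥0∞) ^ (2:ℝ) ∂radialMeasure) ^ (1/(2:ℝ))
      ≤ (R * R) ^ (1/(2:ℝ)) := ENNReal.rpow_le_rpow hmain (by norm_num)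
    _ = R := by
        rw [← h2r, ← ENNReal.rpow_mul]; norm_num
end

section
/- For m ∈ ℤ₊ and λ > 0, the explicit m-equivariant self-dual soliton φ^{(m)}(x) = √8 λ (m+1) |λx|^m / (1 + |λx|^{2(m+1)}) · e^{imθ} has charge ∫_{ℝ²} |φ^{(m)}|² dx = 8π(m+1), independent of λ. -/
open MeasureTheory Set Real

/-- The explicit `m`-equivariant self-dual soliton
`φ^{(m)} = √8 λ(m+1) |λx|^m/(1+|λx|^{2(m+1)}) e^{imθ}` has charge
`∫|φ^{(m)}|² = 2π ∫_0^∞ 8λ²(m+1)² (λr)^{2m} (1+(λr)^{2(m+1)})^{-2} r dr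
 = 8π(m+1)`, independently of `λ > 0`. -/
theorem soliton_charge (m : ℕ) (l : ℝ) (hl : 0 < l) :
    2 * π * ∫ r in Set.Ioi (0 : ℝ),
        8 * l ^ 2 * ((m : ℝ) + 1) ^ 2 * (l * r) ^ (2 * m)
          / (1 + (l * r) ^ (2 * (m + 1))) ^ 2 * r
      = 8 * π * ((m : ℝ) + 1) := by
  set f : ℝ → ℝ := fun r => -4 * ((m : ℝ) + 1) / (1 + (l * r) ^ (2 * (m + 1)))
  have hpos : ∀ r : ℝ, 0 < 1 + (l * r) ^ (2 * (m + 1)) := by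
    intro r
    have : (0:ℝ) ≤ (l * r) ^ (2 * (m + 1)) := by
      rw [mul_comm 2 (m+1), pow_mul]
      positivity
    linarith
  have hderiv : ∀ r : ℝ, HasDerivAt f
      (8 * l ^ 2 * ((m : ℝ) + 1) ^ 2 * (l * r) ^ (2 * m)
          / (1 + (l * r) ^ (2 * (m + 1))) ^ 2 * r) r := by
    intro r
    have h1 : HasDerivAt (fun r : ℝ => 1 + (l * r) ^ (2 * (m + 1)))
        ((2 * (m + 1) : ℕ) * (l * r) ^ (2 * (m + 1) - 1) * l) r := by
      have := ((hasDerivAt_pow (2 * (m + 1)) (l * r)).comp r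
        ((hasDerivAt_id r).const_mul l))
      simpa [mul_comm] using this.const_add 1
    have h2 := (h1.inv (hpos r).ne').const_mul (-4 * ((m : ℝ) + 1))
    have hf : f = fun r => -4 * ((m : ℝ) + 1) * (1 + (l * r) ^ (2 * (m + 1)))⁻¹ := by
      funext r; simp [f, div_eq_mul_inv]
    rw [hf]
    refine HasDerivAt.congr_deriv h2 ?_
    have h3 : 2 * (m + 1) - 1 = 2 * m + 1 := by omega
    rw [h3]
    field_simp
    push_cast
    ring
  have hlim : Filter.Tendsto f Filter.atTop (nhds 0) := by
    have h1 : Filter.Tendsto (fun r : ℝ => 1 + (l * r) ^ (2 * (m + 1)))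
        Filter.atTop Filter.atTop := by
      apply Filter.tendsto_atTop_add_const_left
      have h0 : Filter.Tendsto (fun r : ℝ => l * r) Filter.atTop Filter.atTop :=
        Filter.Tendsto.const_mul_atTop hl Filter.tendsto_id
      exact (Filter.tendsto_pow_atTop (by omega)).comp h0
    have := (h1.inv_tendsto_atTop).const_mul (-4 * ((m : ℝ) + 1))
    simpa [f, div_eq_mul_inv, mul_zero] using this
  have key : (∫ r in Set.Ioi (0 : ℝ),
        8 * l ^ 2 * ((m : ℝ) + 1) ^ 2 * (l * r) ^ (2 * m)
          / (1 + (l * r) ^ (2 * (m + 1))) ^ 2 * r)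
      = 0 - f 0 := by
    apply integral_Ioi_of_hasDerivAt_of_nonneg' (fun x _ => hderiv x) _ hlim
    intro x hx
    have hx0 : 0 < x := hx
    have h1 : (0:ℝ) < 1 + (l * x) ^ (2 * (m + 1)) := hpos x
    positivity
  rw [key]
  have : f 0 = -4 * ((m : ℝ) + 1) := by
    simp [f]
  rw [this]
  ring
end
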